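/- Let φ be a propositional formula in conjunctive normal form over variables x₁,…,x_N with clauses C₁,…,C_M, each clause being a nonempty set of literals from {x₁,…,x_N, x̄₁,…,x̄_N}. Define the MDP M_φ with states S = {x₁,…,x_N, x̄₁,…,x̄_N} and actions Act = {α, ᾱ}, where (indices taken cyclically, so that i+1 denotes 1 when i = N): P(xᵢ,α,x_{i+1}) = P(x̄ᵢ,α,x_{i+1}) = 1 and P(xᵢ,ᾱ,x̄_{i+1}) = P(x̄ᵢ,ᾱ,x̄_{i+1}) = 1 for all 1 ≤ i ≤ N, with all other transition probabilities 0. Identify each clause C_j with the set of states corresponding to its literals. Then φ is satisfiable if and only if there exists a scheduler σ for M_φ with Σ_{i=1}^N [2 − (Pr^{M_φ,σ}_{x₁}(□◇{xᵢ}) + Pr^{M_φ,σ}_{x₁}(□◇{x̄ᵢ}))] + Σ_{j=1}^M Pr^{M_φ,σ}_{x₁}(□◇C_j) ≥ N + M. -/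

import Mathlib

open scoped Classical
open Filter

noncomputable section

/-- A Markov decision process with state space `S` and action space `A`. -/
structure MDP (S A : Type) where
  P : S → A → S → ℝ
  nonneg : ∀ s a s', 0 ≤ P s a s'
  le_one : ∀ s a s', P s a s' ≤ 1
  exists_enabled : ∀ s : S, ∃ a : A, (∑' s', P s a s') = 1
  zero_of_not_enabled : ∀ (s : S) (a : A), (∑' s', P s a s') ≠ 1 → (∑' s', P s a s') = 0

namespace MDP

variable {S A : Type}

/-- Action `a` is enabled in state `s`. -/
def Enabled (M : MDP S A) (s : S) (a : A) : Prop := (∑' s', M.P s a s') = 1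

/-- `s` is an absorbing state. -/
def AbsorbingState (M : MDP S A) (s : S) : Prop := ∀ a : A, M.Enabled s a → M.P s a s = 1

/-- An absorbing set of states: all its elements are absorbing. -/
def AbsorbingSet (M : MDP S A) (T : Set S) : Prop := ∀ s ∈ T, M.AbsorbingState s

end MDP

/-- A finite path: an initial state together with a list of (action, next state) steps. -/
abbrev FPath (S A : Type) : Type := S × List (A × S)

/-- The last state of a finite path. -/
def fpLast {S A : Type} (p : FPath S A) : S := ((p.2.map Prod.snd).getLast?).getD p.1

/-- Extending a finite path by one step. -/
def fpExt {S A : Type} (p : FPath S A) (a : A) (s' : S) : FPath S A := (p.1, p.2 ++ [(a, s')])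

/-- A (history-dependent, randomized) scheduler for the MDP `M`. -/
structure Scheduler {S A : Type} (M : MDP S A) where
  act : FPath S A → A → ℝ
  nonneg : ∀ p a, 0 ≤ act p a
  sum_one : ∀ p, (∑' a, act p a) = 1
  not_enabled : ∀ p a, ¬ M.Enabled (fpLast p) a → act p a = 0

namespace Scheduler

variable {S A : Type} {M : MDP S A}

/-- A memoryless scheduler depends only on the last state of the path. -/
def Memoryless (σ : Scheduler M) : Prop :=
  ∀ p : FPath S A, σ.act p = σ.act (fpLast p, ([] : List (A × S)))

/-- A deterministic scheduler chooses a Dirac distribution on every path. -/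
def Deterministic (σ : Scheduler M) : Prop := ∀ p : FPath S A, ∃ a : A, σ.act p a = 1

/-- A memoryless deterministic (MD) scheduler. -/
def MD (σ : Scheduler M) : Prop := σ.Memoryless ∧ σ.Deterministic

end Scheduler

/-- One-step expectation operator: expected value of `g` after one step from `p`. -/
def stepExp {S A : Type} (M : MDP S A) (σ : Scheduler M) (p : FPath S A)
    (g : FPath S A → ℝ) : ℝ :=
  ∑' a : A, ∑' s' : S, σ.act p a * M.P (fpLast p) a s' * g (fpExt p a s')

/-- Probability of visiting `T` within `n` further steps, continuing the finite path `p`. -/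
def reachN {S A : Type} (M : MDP S A) (σ : Scheduler M) (T : Set S) :
    ℕ → FPath S A → ℝ
  | 0, p => if fpLast p ∈ T then 1 else 0
  | n + 1, p => if fpLast p ∈ T then 1 else stepExp M σ p (reachN M σ T n)

/-- Reachability probability `Pr^{M,σ}_s(◇T)`. -/
def reachProb {S A : Type} (M : MDP S A) (σ : Scheduler M) (s : S) (T : Set S) : ℝ :=
  ⨆ n : ℕ, reachN M σ T n (s, [])

/-- Probability of visiting `T` at some time `≥ j` within `j + n` steps, from path `p`. -/
def reachAfterN {S A : Type} (M : MDP S A) (σ : Scheduler M) (T : Set S) :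
    ℕ → ℕ → FPath S A → ℝ
  | 0, n, p => reachN M σ T n p
  | j + 1, n, p => stepExp M σ p (fun p' => reachAfterN M σ T j n p')

/-- Büchi probability `Pr^{M,σ}_s(□◇T)`: the probability of visiting `T` infinitely often. -/
def buchiProb {S A : Type} (M : MDP S A) (σ : Scheduler M) (s : S) (T : Set S) : ℝ :=
  ⨅ j : ℕ, ⨆ n : ℕ, reachAfterN M σ T j n (s, [])

/-- Expected sum of the rewards of the first `n+1` states (counting the current one). -/
def expRewN {S A : Type} (M : MDP S A) (σ : Scheduler M) (R : S → ℝ) :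
    ℕ → FPath S A → ℝ
  | 0, p => R (fpLast p)
  | n + 1, p => R (fpLast p) + stepExp M σ p (fun p' => expRewN M σ R n p')

/-- Expected total reward `E^{M,σ}_s(R)`. -/
def expTotalReward {S A : Type} (M : MDP S A) (σ : Scheduler M) (R : S → ℝ) (s : S) : ℝ :=
  limUnder atTop (fun n => expRewN M σ R n (s, []))

end

noncomputable section AuxDev

open Finset

set_option maxHeartbeats 1000000
set_option linter.unusedSectionVars false
set_option linter.unusedVariables false

variable {S A : Type} [Fintype S] [Fintype A] {M : MDP S A}

lemma fpLast_fpExt (p : FPath S A) (a : A) (s' : S) : fpLast (fpExt p a s') = s' := by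
  simp [fpLast, fpExt]

lemma fpLast_nil (s : S) : fpLast ((s, []) : FPath S A) = s := rfl

lemma stepExp_eq_sum (σ : Scheduler M) (p : FPath S A) (g : FPath S A → ℝ) :
    stepExp M σ p g
      = ∑ a : A, ∑ s' : S, σ.act p a * M.P (fpLast p) a s' * g (fpExt p a s') := by
  rw [stepExp, tsum_fintype]
  exact Finset.sum_congr rfl fun a _ => tsum_fintype _

lemma stepExp_mono' (σ : Scheduler M) (p : FPath S A) {g h : FPath S A → ℝ}
    (H : ∀ a s', M.P (fpLast p) a s' ≠ 0 → g (fpExt p a s') ≤ h (fpExt p a s')) :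
    stepExp M σ p g ≤ stepExp M σ p h := by
  rw [stepExp_eq_sum, stepExp_eq_sum]
  refine Finset.sum_le_sum fun a _ => Finset.sum_le_sum fun s' _ => ?_
  by_cases hz : M.P (fpLast p) a s' = 0
  · simp [hz]
  · exact mul_le_mul_of_nonneg_left (H a s' hz)
      (mul_nonneg (σ.nonneg p a) (M.nonneg _ a s'))

lemma stepExp_mono (σ : Scheduler M) (p : FPath S A) {g h : FPath S A → ℝ}
    (H : ∀ q, g q ≤ h q) : stepExp M σ p g ≤ stepExp M σ p h :=
  stepExp_mono' σ p fun a s' _ => H _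

lemma stepExp_congr (σ : Scheduler M) (p : FPath S A) {g h : FPath S A → ℝ}
    (H : ∀ q, g q = h q) : stepExp M σ p g = stepExp M σ p h := by
  have : g = h := funext H
  rw [this]

lemma stepExp_add (σ : Scheduler M) (p : FPath S A) (g h : FPath S A → ℝ) :
    stepExp M σ p (fun q => g q + h q) = stepExp M σ p g + stepExp M σ p h := by
  simp only [stepExp_eq_sum, mul_add, Finset.sum_add_distrib]

lemma stepExp_sum {ι : Type} (σ : Scheduler M) (p : FPath S A) (F : Finset ι)
    (g : ι → FPath S A → ℝ) :
    stepExp M σ p (fun q => ∑ v ∈ F, g v q) = ∑ v ∈ F, stepExp M σ p (g v) := by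
  classical
  induction F using Finset.induction with
  | empty => simp [stepExp_eq_sum]
  | insert _ _ hx ih =>
      rw [Finset.sum_insert hx, ← ih, ← stepExp_add]
      apply stepExp_congr
      intro q
      rw [Finset.sum_insert hx]

lemma stepExp_one_add_sum {ι : Type} (σ : Scheduler M) (p : FPath S A) (F : Finset ι)
    (g : ι → FPath S A → ℝ) (hone : stepExp M σ p (fun _ => 1) = 1) :
    stepExp M σ p (fun q => 1 + ∑ i ∈ F, g i q) = 1 + ∑ i ∈ F, stepExp M σ p (g i) :=
  calc stepExp M σ p (fun q => 1 + ∑ i ∈ F, g i q)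
      = stepExp M σ p (fun _ => 1) + stepExp M σ p (fun q => ∑ i ∈ F, g i q) :=
        stepExp_add σ p _ _
    _ = 1 + ∑ i ∈ F, stepExp M σ p (g i) := by rw [hone, stepExp_sum]

lemma stepExp_const_one (σ : Scheduler M) (p : FPath S A) :
    stepExp M σ p (fun _ => 1) = 1 := by
  rw [stepExp_eq_sum]
  have key : ∀ a : A, ∑ s' : S, σ.act p a * M.P (fpLast p) a s' * 1 = σ.act p a := by
    intro a
    simp only [mul_one, ← Finset.mul_sum]
    by_cases h : (∑' s', M.P (fpLast p) a s') = 1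
    · rw [tsum_fintype] at h; rw [h, mul_one]
    · have h0 := M.zero_of_not_enabled (fpLast p) a h
      rw [tsum_fintype] at h0
      rw [h0, mul_zero]
      exact (σ.not_enabled p a h).symm
  rw [Finset.sum_congr rfl fun a _ => key a]
  have := σ.sum_one p
  rwa [tsum_fintype] at this

lemma stepExp_nonneg (σ : Scheduler M) (p : FPath S A) {g : FPath S A → ℝ}
    (H : ∀ q, 0 ≤ g q) : 0 ≤ stepExp M σ p g := by
  rw [stepExp_eq_sum]
  refine Finset.sum_nonneg fun a _ => Finset.sum_nonneg fun s' _ =>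
    mul_nonneg (mul_nonneg (σ.nonneg p a) (M.nonneg _ a s')) (H _)

lemma stepExp_le_one (σ : Scheduler M) (p : FPath S A) {g : FPath S A → ℝ}
    (H : ∀ q, g q ≤ 1) : stepExp M σ p g ≤ 1 := by
  calc stepExp M σ p g ≤ stepExp M σ p (fun _ => 1) := stepExp_mono σ p H
    _ = 1 := stepExp_const_one σ p

lemma one_le_stepExp (σ : Scheduler M) (p : FPath S A) {g : FPath S A → ℝ}
    (H : ∀ a s', M.P (fpLast p) a s' ≠ 0 → 1 ≤ g (fpExt p a s')) :
    1 ≤ stepExp M σ p g := by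
  calc (1:ℝ) = stepExp M σ p (fun _ => 1) := (stepExp_const_one σ p).symm
    _ ≤ stepExp M σ p g := stepExp_mono' σ p H

/-- Remove from the family all sets containing `s`. -/
def strip (R : Finset (Set S)) (s : S) : Finset (Set S) := R.filter (fun T => s ∉ T)

lemma strip_empty (s : S) : strip (∅ : Finset (Set S)) s = ∅ := rfl

lemma strip_subset (R : Finset (Set S)) (s : S) : strip R s ⊆ R := Finset.filter_subset _ _

lemma strip_mono {R₁ R₂ : Finset (Set S)} (h : R₁ ⊆ R₂) (s : S) :
    strip R₁ s ⊆ strip R₂ s := Finset.filter_subset_filter _ h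

/-- Probability of visiting every member of the family `R` within `n` steps. -/
def rAll (σ : Scheduler M) : Finset (Set S) → ℕ → FPath S A → ℝ
  | R, 0, p => if strip R (fpLast p) = ∅ then 1 else 0
  | R, n+1, p => stepExp M σ p (rAll σ (strip R (fpLast p)) n)

lemma rAll_zero (σ : Scheduler M) (R : Finset (Set S)) (p : FPath S A) :
    rAll σ R 0 p = if strip R (fpLast p) = ∅ then 1 else 0 := rfl

lemma rAll_succ (σ : Scheduler M) (R : Finset (Set S)) (n : ℕ) (p : FPath S A) :
    rAll σ R (n+1) p = stepExp M σ p (rAll σ (strip R (fpLast p)) n) := rfl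

lemma rAll_nonneg (σ : Scheduler M) (R : Finset (Set S)) (n : ℕ) (p : FPath S A) :
    0 ≤ rAll σ R n p := by
  induction n generalizing R p with
  | zero => rw [rAll_zero]; split <;> norm_num
  | succ n ih => rw [rAll_succ]; exact stepExp_nonneg σ p fun q => ih _ _

lemma rAll_empty (σ : Scheduler M) (n : ℕ) (p : FPath S A) :
    rAll σ (∅ : Finset (Set S)) n p = 1 := by
  induction n generalizing p with
  | zero => rw [rAll_zero]; simp [strip_empty]
  | succ n ih =>
      rw [rAll_succ, strip_empty]
      rw [stepExp_congr σ p fun q => ih q]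
      exact stepExp_const_one σ p

lemma rAll_le_one (σ : Scheduler M) (R : Finset (Set S)) (n : ℕ) (p : FPath S A) :
    rAll σ R n p ≤ 1 := by
  induction n generalizing R p with
  | zero => rw [rAll_zero]; split <;> norm_num
  | succ n ih => rw [rAll_succ]; exact stepExp_le_one σ p fun q => ih _ _

lemma rAll_anti_family (σ : Scheduler M) {R₁ R₂ : Finset (Set S)} (h : R₁ ⊆ R₂)
    (n : ℕ) (p : FPath S A) : rAll σ R₂ n p ≤ rAll σ R₁ n p := by
  induction n generalizing R₁ R₂ p with
  | zero =>
      rw [rAll_zero, rAll_zero]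
      by_cases h1 : strip R₁ (fpLast p) = ∅
      · have h2 : strip R₂ (fpLast p) = ∅ ∨ True := Or.inr trivial
        split <;> simp [h1]
      · have h2 : strip R₂ (fpLast p) ≠ ∅ := fun hh => h1 (Finset.subset_empty.1 (hh ▸ strip_mono h _))
        simp [h1, h2]
  | succ n ih =>
      rw [rAll_succ, rAll_succ]
      exact stepExp_mono σ p fun q => ih (strip_mono h _) _

lemma rAll_step_le (σ : Scheduler M) (R : Finset (Set S)) (n : ℕ) (p : FPath S A) :
    stepExp M σ p (rAll σ R n) ≤ rAll σ R (n+1) p := by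
  rw [rAll_succ]
  exact stepExp_mono σ p fun q => rAll_anti_family σ (strip_subset R _) n q

lemma rAll_mono_n (σ : Scheduler M) (R : Finset (Set S)) (n : ℕ) (p : FPath S A) :
    rAll σ R n p ≤ rAll σ R (n+1) p := by
  induction n generalizing R p with
  | zero =>
      rw [rAll_zero, rAll_succ]
      by_cases h : strip R (fpLast p) = ∅
      · simp only [h, if_true]
        rw [stepExp_congr σ p fun q => rAll_empty σ 0 q]
        exact le_of_eq (stepExp_const_one σ p).symm
      · simp only [h, if_false]
        exact stepExp_nonneg σ p fun q => rAll_nonneg σ _ _ _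
  | succ n ih =>
      rw [rAll_succ, rAll_succ]
      exact stepExp_mono σ p fun q => ih _ _

/-- Probability of visiting every member of `R` within the window `[j, j+n]`. -/
def rAfter (σ : Scheduler M) (R : Finset (Set S)) : ℕ → ℕ → FPath S A → ℝ
  | 0, n, p => rAll σ R n p
  | j+1, n, p => stepExp M σ p (rAfter σ R j n)

lemma rAfter_zero (σ : Scheduler M) (R : Finset (Set S)) (n : ℕ) (p : FPath S A) :
    rAfter σ R 0 n p = rAll σ R n p := rfl

lemma rAfter_succ (σ : Scheduler M) (R : Finset (Set S)) (j n : ℕ) (p : FPath S A) :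
    rAfter σ R (j+1) n p = stepExp M σ p (rAfter σ R j n) := rfl

lemma rAfter_nonneg (σ : Scheduler M) (R : Finset (Set S)) (j n : ℕ) (p : FPath S A) :
    0 ≤ rAfter σ R j n p := by
  induction j generalizing p with
  | zero => exact rAll_nonneg σ R n p
  | succ j ih => exact stepExp_nonneg σ p fun q => ih q

lemma rAfter_le_one (σ : Scheduler M) (R : Finset (Set S)) (j n : ℕ) (p : FPath S A) :
    rAfter σ R j n p ≤ 1 := by
  induction j generalizing p with
  | zero => exact rAll_le_one σ R n p
  | succ j ih => exact stepExp_le_one σ p fun q => ih q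

lemma rAfter_mono_n (σ : Scheduler M) (R : Finset (Set S)) (j n : ℕ) (p : FPath S A) :
    rAfter σ R j n p ≤ rAfter σ R j (n+1) p := by
  induction j generalizing p with
  | zero => exact rAll_mono_n σ R n p
  | succ j ih => exact stepExp_mono σ p fun q => ih q

lemma rAfter_succ_le (σ : Scheduler M) (R : Finset (Set S)) (j n : ℕ) (p : FPath S A) :
    rAfter σ R (j+1) n p ≤ rAfter σ R j (n+1) p := by
  induction j generalizing p with
  | zero => exact rAll_step_le σ R n p
  | succ j ih => exact stepExp_mono σ p fun q => ih q

/-- Bridge: `reachN` is `rAll` of a singleton family. -/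
lemma reachN_eq_rAll (σ : Scheduler M) (T : Set S) (n : ℕ) (p : FPath S A) :
    reachN M σ T n p = rAll σ {T} n p := by
  have hstrip : ∀ q : FPath S A, strip ({T} : Finset (Set S)) (fpLast q)
      = if fpLast q ∉ T then {T} else ∅ := by
    intro q; exact Finset.filter_singleton _ _
  induction n generalizing p with
  | zero =>
      rw [reachN, rAll_zero, hstrip]
      by_cases h : fpLast p ∈ T <;> simp [h]
  | succ n ih =>
      rw [reachN, rAll_succ, hstrip]
      by_cases h : fpLast p ∈ T
      · simp only [h, not_true, if_false, if_true]
        rw [stepExp_congr σ p fun q => rAll_empty σ n q]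
        exact (stepExp_const_one σ p).symm
      · simp only [h, not_false_iff, if_true, if_false]
        exact stepExp_congr σ p fun q => ih q

lemma reachAfterN_eq_rAfter (σ : Scheduler M) (T : Set S) (j n : ℕ) (p : FPath S A) :
    reachAfterN M σ T j n p = rAfter σ {T} j n p := by
  induction j generalizing p with
  | zero => exact reachN_eq_rAll σ T n p
  | succ j ih =>
      rw [reachAfterN, rAfter_succ]
      exact stepExp_congr σ p fun q => ih q

/-- The supremum over window lengths. -/
def aSup (σ : Scheduler M) (R : Finset (Set S)) (j : ℕ) (s : S) : ℝ :=
  ⨆ n : ℕ, rAfter σ R j n ((s, []) : FPath S A)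

/-- Büchi-type value for a family of sets. -/
def bAll (σ : Scheduler M) (R : Finset (Set S)) (s : S) : ℝ := ⨅ j : ℕ, aSup σ R j s

lemma buchiProb_eq_bAll (σ : Scheduler M) (s : S) (T : Set S) :
    buchiProb M σ s T = bAll σ {T} s := by
  unfold buchiProb bAll aSup
  congr 1; funext j; congr 1; funext n
  exact reachAfterN_eq_rAfter σ T j n _

lemma bddAbove_rAfter (σ : Scheduler M) (R : Finset (Set S)) (j : ℕ) (s : S) :
    BddAbove (Set.range fun n => rAfter σ R j n ((s, []) : FPath S A)) := by
  refine ⟨1, ?_⟩; rintro x ⟨n, rfl⟩; exact rAfter_le_one σ R j n _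

lemma rAfter_le_aSup (σ : Scheduler M) (R : Finset (Set S)) (j n : ℕ) (s : S) :
    rAfter σ R j n ((s, []) : FPath S A) ≤ aSup σ R j s :=
  le_ciSup (bddAbove_rAfter σ R j s) n

lemma aSup_le_one (σ : Scheduler M) (R : Finset (Set S)) (j : ℕ) (s : S) :
    aSup σ R j s ≤ 1 :=
  ciSup_le fun n => rAfter_le_one σ R j n _

lemma aSup_nonneg (σ : Scheduler M) (R : Finset (Set S)) (j : ℕ) (s : S) :
    0 ≤ aSup σ R j s :=
  le_trans (rAfter_nonneg σ R j 0 _) (rAfter_le_aSup σ R j 0 s)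

lemma aSup_anti (σ : Scheduler M) (R : Finset (Set S)) (j : ℕ) (s : S) :
    aSup σ R (j+1) s ≤ aSup σ R j s :=
  ciSup_le fun n => le_trans (rAfter_succ_le σ R j n _) (rAfter_le_aSup σ R j (n+1) s)

lemma tendsto_aSup (σ : Scheduler M) (R : Finset (Set S)) (j : ℕ) (s : S) :
    Filter.Tendsto (fun n => rAfter σ R j n ((s, []) : FPath S A))
      Filter.atTop (nhds (aSup σ R j s)) :=
  tendsto_atTop_ciSup (monotone_nat_of_le_succ fun n => rAfter_mono_n σ R j n _)
    (bddAbove_rAfter σ R j s)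

lemma tendsto_bAll (σ : Scheduler M) (R : Finset (Set S)) (s : S) :
    Filter.Tendsto (fun j => aSup σ R j s) Filter.atTop (nhds (bAll σ R s)) := by
  refine tendsto_atTop_ciInf (antitone_nat_of_succ_le fun j => aSup_anti σ R j s) ?_
  refine ⟨0, ?_⟩; rintro x ⟨j, rfl⟩; exact aSup_nonneg σ R j s

lemma bAll_nonneg (σ : Scheduler M) (R : Finset (Set S)) (s : S) : 0 ≤ bAll σ R s :=
  ge_of_tendsto' (tendsto_bAll σ R s) fun j => aSup_nonneg σ R j s

lemma bAll_le_one (σ : Scheduler M) (R : Finset (Set S)) (s : S) : bAll σ R s ≤ 1 :=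
  le_of_tendsto' (tendsto_bAll σ R s) fun j => aSup_le_one σ R j s

end AuxDev


noncomputable section AuxDev2

open Finset

set_option maxHeartbeats 1000000

set_option linter.unusedSectionVars false
set_option linter.unusedVariables false

variable {S A : Type} [Fintype S] [Fintype A] {M : MDP S A}

/-- Remove from `R` all sets meeting `V`. -/
def stripV (R : Finset (Set S)) (V : Set S) : Finset (Set S) :=
  R.filter (fun T => ∀ s ∈ V, s ∉ T)

lemma stripV_emptyV (R : Finset (Set S)) : stripV R (∅ : Set S) = R := by
  ext T
  simp [stripV]

lemma strip_stripV (R : Finset (Set S)) (V : Set S) (s : S) :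
    strip (stripV R V) s = stripV R (V ∪ {s}) := by
  unfold strip stripV
  ext T
  simp only [Finset.mem_filter, Set.mem_union, Set.mem_singleton_iff]
  constructor
  · rintro ⟨⟨hT, h1⟩, h2⟩
    refine ⟨hT, ?_⟩
    rintro x (hx | rfl)
    · exact h1 x hx
    · exact h2
  · rintro ⟨hT, h⟩
    exact ⟨⟨hT, fun x hx => h x (Or.inl hx)⟩, h s (Or.inr rfl)⟩

lemma rAll_stripV_zero (σ : Scheduler M) (R : Finset (Set S)) (V : Set S) (p : FPath S A) :
    rAll σ (stripV R V) 0 p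
      = if stripV R (V ∪ {fpLast p}) = ∅ then 1 else 0 := by
  rw [rAll_zero, strip_stripV]

lemma rAll_stripV_succ (σ : Scheduler M) (R : Finset (Set S)) (V : Set S) (n : ℕ)
    (p : FPath S A) :
    rAll σ (stripV R V) (n+1) p
      = stepExp M σ p (rAll σ (stripV R (V ∪ {fpLast p})) n) := by
  rw [rAll_succ, strip_stripV]

lemma stripV_singleton (T : Set S) (V : Set S) :
    stripV ({T} : Finset (Set S)) V = if ∀ s ∈ V, s ∉ T then {T} else ∅ :=
  Finset.filter_singleton _ _

lemma stripV_singleton_eq_empty (T : Set S) (V : Set S) :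
    stripV ({T} : Finset (Set S)) V = ∅ ↔ ∃ s ∈ V, s ∈ T := by
  rw [stripV_singleton]
  by_cases h : ∀ s ∈ V, s ∉ T
  · rw [if_pos h]
    constructor
    · intro hh; exact absurd hh (Finset.singleton_ne_empty T)
    · rintro ⟨s, hs, hsT⟩; exact absurd hsT (h s hs)
  · rw [if_neg h]
    push_neg at h
    simp only [true_iff]
    exact h

end AuxDev2

noncomputable section Concrete

open Finset

set_option maxHeartbeats 1000000

set_option linter.unusedSectionVars false
set_option linter.unusedVariables false

variable {N : ℕ} {Mφ : MDP (Fin N × Bool) Bool}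

/-- Next column (cyclically). -/
def nxt (hN : 0 < N) (c : Fin N) : Fin N := ⟨(c.1 + 1) % N, Nat.mod_lt _ hN⟩

section withHP

variable (hN : 0 < N)
variable (hP : ∀ (i : Fin N) (b c : Bool),
      Mφ.P (i, b) c ((⟨(i.1 + 1) % N, Nat.mod_lt _ hN⟩ : Fin N), c) = 1 ∧
      ∀ y : Fin N × Bool, y ≠ ((⟨(i.1 + 1) % N, Nat.mod_lt _ hN⟩ : Fin N), c) →
        Mφ.P (i, b) c y = 0)

include hN hP

lemma P_target (s : Fin N × Bool) (a : Bool) : Mφ.P s a (nxt hN s.1, a) = 1 := by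
  obtain ⟨i, b⟩ := s
  exact (hP i b a).1

lemma P_support {s : Fin N × Bool} {a : Bool} {y : Fin N × Bool}
    (h : Mφ.P s a y ≠ 0) : y = (nxt hN s.1, a) := by
  by_contra hne
  obtain ⟨i, b⟩ := s
  exact h ((hP i b a).2 y hne)

lemma enabled_all (s : Fin N × Bool) (a : Bool) : Mφ.Enabled s a := by
  unfold MDP.Enabled
  rw [tsum_fintype]
  rw [Finset.sum_eq_single (nxt hN s.1, a)]
  · exact P_target hN hP s a
  · intro y _ hy
    obtain ⟨i, b⟩ := s
    exact (hP i b a).2 y hy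
  · intro hy
    exact absurd (Finset.mem_univ _) hy

/-- For this MDP, `1 ≤ stepExp` as soon as the function is `≥ 1` on the two successors. -/
lemma one_le_stepExp_nxt (σ : Scheduler Mφ) (p : FPath (Fin N × Bool) Bool)
    {g : FPath (Fin N × Bool) Bool → ℝ}
    (H : ∀ a : Bool, 1 ≤ g (fpExt p a (nxt hN (fpLast p).1, a))) :
    1 ≤ stepExp Mφ σ p g := by
  apply one_le_stepExp
  intro a s' hs'
  have := P_support hN hP hs'
  rw [this]
  exact H a

end withHP

/-- Cyclic distance from column `c` to column `i`. -/
def dd (c i : Fin N) : ℕ := if c.1 ≤ i.1 then i.1 - c.1 else i.1 + N - c.1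

lemma dd_le (c i : Fin N) : dd c i ≤ N - 1 := by
  have hc := c.2; have hi := i.2
  unfold dd; split <;> omega

lemma dd_eq_zero {c i : Fin N} (h : dd c i = 0) : i = c := by
  have hc := c.2; have hi := i.2
  unfold dd at h
  refine Fin.ext ?_
  split at h <;> omega

lemma dd_step (hN : 0 < N) {c i : Fin N} (h : i ≠ c) : dd (nxt hN c) i + 1 = dd c i := by
  have hc := c.2; have hi := i.2
  have hne : i.1 ≠ c.1 := fun hh => h (Fin.ext hh)
  have hval : (nxt hN c).1 = (c.1 + 1) % N := rfl
  rcases Nat.lt_or_ge (c.1 + 1) N with h' | h'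
  · have hm : (c.1 + 1) % N = c.1 + 1 := Nat.mod_eq_of_lt h'
    unfold dd
    rw [hval, hm]
    split <;> split <;> omega
  · have hceq : c.1 + 1 = N := le_antisymm hc h'
    have hm : (c.1 + 1) % N = 0 := by rw [hceq, Nat.mod_self]
    unfold dd
    rw [hval, hm]
    split <;> split <;> omega

section withHP2

variable (hN : 0 < N)
variable (hP : ∀ (i : Fin N) (b c : Bool),
      Mφ.P (i, b) c ((⟨(i.1 + 1) % N, Nat.mod_lt _ hN⟩ : Fin N), c) = 1 ∧
      ∀ y : Fin N × Bool, y ≠ ((⟨(i.1 + 1) % N, Nat.mod_lt _ hN⟩ : Fin N), c) →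
        Mφ.P (i, b) c y = 0)

include hN hP

/-- Hitting a full column: reach within `dd` steps with probability one. -/
lemma rAll_col_one (σ : Scheduler Mφ) (U : Set (Fin N × Bool)) (i : Fin N)
    (hU : ∀ b : Bool, ((i, b) : Fin N × Bool) ∈ U) :
    ∀ (n : ℕ) (p : FPath (Fin N × Bool) Bool), dd (fpLast p).1 i ≤ n → rAll σ {U} n p = 1 := by
  intro n
  induction n with
  | zero =>
      intro p hd
      have hzi : i = (fpLast p).1 := dd_eq_zero (Nat.le_zero.1 hd)
      have hl : fpLast p ∈ U := by
        have h2 := hU (fpLast p).2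
        rw [hzi] at h2
        exact h2
      simp [rAll_zero, strip, Finset.filter_singleton, hl]
  | succ n ih =>
      intro p hd
      by_cases hl : fpLast p ∈ U
      · rw [rAll_succ]
        have hs : strip ({U} : Finset (Set (Fin N × Bool))) (fpLast p) = ∅ := by
          simp [strip, Finset.filter_singleton, hl]
        rw [hs, stepExp_congr σ p (rAll_empty σ n)]
        exact stepExp_const_one σ p
      · have hne : i ≠ (fpLast p).1 := by
          intro hh
          apply hl
          have h2 := hU (fpLast p).2
          rw [hh] at h2
          exact h2
        rw [rAll_succ]
        have hs : strip ({U} : Finset (Set (Fin N × Bool))) (fpLast p) = {U} := by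
          simp [strip, Finset.filter_singleton, hl]
        rw [hs]
        refine le_antisymm (stepExp_le_one σ p fun q => rAll_le_one σ _ n q) ?_
        apply one_le_stepExp_nxt hN hP
        intro a
        have hd' : dd (fpLast (fpExt p a (nxt hN (fpLast p).1, a))).1 i ≤ n := by
          rw [fpLast_fpExt]
          show dd (nxt hN (fpLast p).1) i ≤ n
          have := dd_step hN hne
          omega
        exact le_of_eq (ih _ hd').symm

lemma one_le_rAfter_col (σ : Scheduler Mφ) (U : Set (Fin N × Bool)) (i : Fin N)
    (hU : ∀ b : Bool, ((i, b) : Fin N × Bool) ∈ U) :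
    ∀ (j : ℕ) (p : FPath (Fin N × Bool) Bool), 1 ≤ rAfter σ {U} j (N - 1) p := by
  intro j
  induction j with
  | zero =>
      intro p
      rw [rAfter_zero]
      exact le_of_eq (rAll_col_one hN hP σ U i hU (N-1) p (dd_le _ _)).symm
  | succ j ih =>
      intro p
      rw [rAfter_succ]
      exact one_le_stepExp σ p fun a s' _ => ih _

lemma one_le_bAll_col (σ : Scheduler Mφ) (U : Set (Fin N × Bool)) (i : Fin N)
    (hU : ∀ b : Bool, ((i, b) : Fin N × Bool) ∈ U) (s : Fin N × Bool) :
    1 ≤ bAll σ {U} s := by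
  refine le_ciInf fun j => ?_
  exact le_trans (one_le_rAfter_col hN hP σ U i hU j _) (rAfter_le_aSup σ _ j (N-1) s)

end withHP2

end Concrete


noncomputable section Combos

open Finset

set_option maxHeartbeats 1000000

set_option linter.unusedSectionVars false
set_option linter.unusedVariables false

variable {N : ℕ} {Mφ : MDP (Fin N × Bool) Bool}

/-- Generic helpers about `stripV` emptiness. -/
lemma stripV_mem_elim {S : Type} [Fintype S] {R : Finset (Set S)} {V : Set S} {T : Set S}
    (h : stripV R V = ∅) (hT : T ∈ R) : ∃ s ∈ V, s ∈ T := by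
  by_contra hc
  push_neg at hc
  have : T ∈ stripV R V := Finset.mem_filter.2 ⟨hT, hc⟩
  rw [h] at this
  exact absurd this (Finset.notMem_empty T)

lemma stripV_eq_empty_of {S : Type} [Fintype S] {R : Finset (Set S)} {V : Set S}
    (h : ∀ T ∈ R, ∃ s ∈ V, s ∈ T) : stripV R V = ∅ := by
  rw [Finset.eq_empty_iff_forall_notMem]
  intro T hT
  rw [stripV, Finset.mem_filter] at hT
  obtain ⟨s, hs, hsT⟩ := h T hT.1
  exact hT.2 s hs hsT

lemma stripV_pair_eq_empty {S : Type} [Fintype S] (T₁ T₂ : Set S) (V : Set S) :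
    stripV ({T₁, T₂} : Finset (Set S)) V = ∅ ↔ (∃ s ∈ V, s ∈ T₁) ∧ (∃ s ∈ V, s ∈ T₂) := by
  constructor
  · intro h
    exact ⟨stripV_mem_elim h (Finset.mem_insert_self _ _),
      stripV_mem_elim h (Finset.mem_insert_of_mem (Finset.mem_singleton_self _))⟩
  · rintro ⟨h1, h2⟩
    refine stripV_eq_empty_of fun T hT => ?_
    rcases Finset.mem_insert.1 hT with rfl | hT'
    · exact h1
    · rw [Finset.mem_singleton] at hT'
      subst hT'
      exact h2

lemma stripV_union_eq_empty {S : Type} [Fintype S] (T₁ T₂ : Set S) (V : Set S) :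
    stripV ({T₁ ∪ T₂} : Finset (Set S)) V = ∅ ↔ (∃ s ∈ V, s ∈ T₁) ∨ (∃ s ∈ V, s ∈ T₂) := by
  rw [stripV_singleton_eq_empty]
  constructor
  · rintro ⟨s, hs, hsT⟩
    rcases hsT with h | h
    · exact Or.inl ⟨s, hs, h⟩
    · exact Or.inr ⟨s, hs, h⟩
  · rintro (⟨s, hs, h⟩ | ⟨s, hs, h⟩)
    · exact ⟨s, hs, Or.inl h⟩
    · exact ⟨s, hs, Or.inr h⟩

/-- The family of singletons `{(i, v i)}` for an assignment `v`. -/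
def famF (v : Fin N → Bool) : Finset (Set (Fin N × Bool)) :=
  Finset.image (fun i : Fin N => ({(i, v i)} : Set (Fin N × Bool))) Finset.univ

/-- The family consisting of the two sign singletons of column `i`. -/
def pairF (i : Fin N) : Finset (Set (Fin N × Bool)) :=
  {({(i, true)} : Set (Fin N × Bool)), ({(i, false)} : Set (Fin N × Bool))}

lemma stripV_famF_eq_empty (v : Fin N → Bool) (V : Set (Fin N × Bool)) :
    stripV (famF v) V = ∅ ↔ ∀ i : Fin N, ((i, v i) : Fin N × Bool) ∈ V := by
  constructor
  · intro h i
    obtain ⟨s, hs, hsT⟩ := stripV_mem_elim h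
      (Finset.mem_image.2 ⟨i, Finset.mem_univ i, rfl⟩)
    rw [Set.mem_singleton_iff] at hsT
    rwa [hsT] at hs
  · intro h
    refine stripV_eq_empty_of fun T hT => ?_
    obtain ⟨i, _, rfl⟩ := Finset.mem_image.1 hT
    exact ⟨(i, v i), h i, rfl⟩

lemma stripV_pairF_eq_empty (i : Fin N) (V : Set (Fin N × Bool)) :
    stripV (pairF i) V = ∅ ↔ ((i, true) : Fin N × Bool) ∈ V ∧ ((i, false) : Fin N × Bool) ∈ V := by
  rw [pairF, stripV_pair_eq_empty]
  constructor
  · rintro ⟨⟨s, hs, hs1⟩, ⟨t, ht, ht1⟩⟩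
    rw [Set.mem_singleton_iff] at hs1 ht1
    exact ⟨hs1 ▸ hs, ht1 ▸ ht⟩
  · rintro ⟨h1, h2⟩
    exact ⟨⟨_, h1, rfl⟩, ⟨_, h2, rfl⟩⟩

/-- (c) Modularity at the `rAll` level. -/
lemma rAll_modular (σ : Scheduler Mφ) (T₁ T₂ : Set (Fin N × Bool)) :
    ∀ (n : ℕ) (V : Set (Fin N × Bool)) (p : FPath (Fin N × Bool) Bool),
    rAll σ (stripV {T₁, T₂} V) n p + rAll σ (stripV {T₁ ∪ T₂} V) n p
      ≤ rAll σ (stripV {T₁} V) n p + rAll σ (stripV {T₂} V) n p := by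
  intro n
  induction n with
  | zero =>
      intro V p
      rw [rAll_stripV_zero, rAll_stripV_zero, rAll_stripV_zero, rAll_stripV_zero]
      set V' := V ∪ {fpLast p} with hV'
      by_cases hA : ∃ s ∈ V', s ∈ T₁ <;> by_cases hB : ∃ s ∈ V', s ∈ T₂
      · rw [if_pos ((stripV_pair_eq_empty T₁ T₂ V').2 ⟨hA, hB⟩),
          if_pos ((stripV_union_eq_empty T₁ T₂ V').2 (Or.inl hA)),
          if_pos ((stripV_singleton_eq_empty T₁ V').2 hA),
          if_pos ((stripV_singleton_eq_empty T₂ V').2 hB)]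
      · rw [if_neg (fun hh => hB ((stripV_pair_eq_empty T₁ T₂ V').1 hh).2),
          if_pos ((stripV_union_eq_empty T₁ T₂ V').2 (Or.inl hA)),
          if_pos ((stripV_singleton_eq_empty T₁ V').2 hA),
          if_neg (fun hh => hB ((stripV_singleton_eq_empty T₂ V').1 hh))]
        norm_num
      · rw [if_neg (fun hh => hA ((stripV_pair_eq_empty T₁ T₂ V').1 hh).1),
          if_pos ((stripV_union_eq_empty T₁ T₂ V').2 (Or.inr hB)),
          if_neg (fun hh => hA ((stripV_singleton_eq_empty T₁ V').1 hh)),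
          if_pos ((stripV_singleton_eq_empty T₂ V').2 hB)]
      · rw [if_neg (fun hh => hA ((stripV_pair_eq_empty T₁ T₂ V').1 hh).1),
          if_neg (fun hh => (((stripV_union_eq_empty T₁ T₂ V').1 hh).elim hA hB)),
          if_neg (fun hh => hA ((stripV_singleton_eq_empty T₁ V').1 hh)),
          if_neg (fun hh => hB ((stripV_singleton_eq_empty T₂ V').1 hh))]
  | succ n ih =>
      intro V p
      rw [rAll_stripV_succ, rAll_stripV_succ, rAll_stripV_succ, rAll_stripV_succ,
        ← stepExp_add, ← stepExp_add]
      exact stepExp_mono σ p fun q => ih (V ∪ {fpLast p}) q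

lemma rAfter_modular (σ : Scheduler Mφ) (T₁ T₂ : Set (Fin N × Bool)) :
    ∀ (j n : ℕ) (p : FPath (Fin N × Bool) Bool),
    rAfter σ {T₁, T₂} j n p + rAfter σ {T₁ ∪ T₂} j n p
      ≤ rAfter σ {T₁} j n p + rAfter σ {T₂} j n p := by
  intro j
  induction j with
  | zero =>
      intro n p
      have := rAll_modular σ T₁ T₂ n ∅ p
      rwa [stripV_emptyV, stripV_emptyV, stripV_emptyV, stripV_emptyV] at this
  | succ j ih =>
      intro n p
      rw [rAfter_succ, rAfter_succ, rAfter_succ, rAfter_succ, ← stepExp_add, ← stepExp_add]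
      exact stepExp_mono σ p fun q => ih n q

lemma bAll_modular (σ : Scheduler Mφ) (T₁ T₂ : Set (Fin N × Bool)) (s : Fin N × Bool) :
    bAll σ {T₁, T₂} s + bAll σ {T₁ ∪ T₂} s ≤ bAll σ {T₁} s + bAll σ {T₂} s := by
  have hsup : ∀ j, aSup σ {T₁, T₂} j s + aSup σ {T₁ ∪ T₂} j s
      ≤ aSup σ {T₁} j s + aSup σ {T₂} j s := by
    intro j
    refine le_of_tendsto_of_tendsto'
      ((tendsto_aSup σ {T₁, T₂} j s).add (tendsto_aSup σ {T₁ ∪ T₂} j s))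
      ((tendsto_aSup σ {T₁} j s).add (tendsto_aSup σ {T₂} j s))
      fun n => rAfter_modular σ T₁ T₂ j n _
  refine le_of_tendsto_of_tendsto'
    ((tendsto_bAll σ {T₁, T₂} s).add (tendsto_bAll σ {T₁ ∪ T₂} s))
    ((tendsto_bAll σ {T₁} s).add (tendsto_bAll σ {T₂} s))
    hsup

/-- (b) If `v` violates clause `C`, then at the `rAll` level. -/
lemma rAll_viol (σ : Scheduler Mφ) (v : Fin N → Bool) (C : Set (Fin N × Bool))
    (hC : ∀ l ∈ C, ((l.1, v l.1) : Fin N × Bool) ≠ l) :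
    ∀ (n : ℕ) (V : Set (Fin N × Bool)) (p : FPath (Fin N × Bool) Bool),
    rAll σ (stripV (famF v) V) n p + rAll σ (stripV {C} V) n p
      ≤ 1 + ∑ i : Fin N, rAll σ (stripV (pairF i) V) n p := by
  intro n
  induction n with
  | zero =>
      intro V p
      set V' := V ∪ {fpLast p} with hV'
      by_cases h1 : stripV (famF v) (V ∪ {fpLast p}) = ∅
      · by_cases h2 : stripV ({C} : Finset (Set (Fin N × Bool))) (V ∪ {fpLast p}) = ∅
        · -- hard case : both hit
          obtain ⟨l, hlV, hlC⟩ := (stripV_singleton_eq_empty C _).1 h2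
          have hvl : ∀ i : Fin N, ((i, v i) : Fin N × Bool) ∈ V ∪ {fpLast p} :=
            (stripV_famF_eq_empty v _).1 h1
          have hne : v l.1 ≠ l.2 := by
            intro hh
            exact hC l hlC (by rw [hh])
          have hboth : ((l.1, true) : Fin N × Bool) ∈ V ∪ {fpLast p}
              ∧ ((l.1, false) : Fin N × Bool) ∈ V ∪ {fpLast p} := by
            have h3 := hvl l.1
            have h4 : ((l.1, l.2) : Fin N × Bool) ∈ V ∪ {fpLast p} := by
              rw [Prod.mk.eta]; exact hlV
            cases hb : v l.1 <;> cases hb2 : l.2 <;>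
              simp [hb, hb2] at hne h3 h4 ⊢ <;>
              first
                | exact ⟨h3, h4⟩
                | exact ⟨h4, h3⟩
          have hterm : rAll σ (stripV (pairF l.1) V) 0 p = 1 := by
            rw [rAll_stripV_zero,
              if_pos ((stripV_pairF_eq_empty l.1 _).2 ⟨hboth.1, hboth.2⟩)]
          have hsum : (1 : ℝ) ≤ ∑ i : Fin N, rAll σ (stripV (pairF i) V) 0 p := by
            rw [← hterm]
            exact Finset.single_le_sum (f := fun i => rAll σ (stripV (pairF i) V) 0 p)
              (fun i _ => rAll_nonneg σ _ 0 p) (Finset.mem_univ l.1)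
          rw [rAll_stripV_zero, rAll_stripV_zero, if_pos h1, if_pos h2]
          linarith
        · rw [rAll_stripV_zero, rAll_stripV_zero, if_pos h1, if_neg h2]
          have : (0:ℝ) ≤ ∑ i : Fin N, rAll σ (stripV (pairF i) V) 0 p :=
            Finset.sum_nonneg fun i _ => rAll_nonneg σ _ 0 p
          linarith
      · rw [rAll_stripV_zero, rAll_stripV_zero, if_neg h1]
        have h5 : (if stripV ({C} : Finset (Set (Fin N × Bool))) (V ∪ {fpLast p}) = ∅
            then (1:ℝ) else 0) ≤ 1 := by split <;> norm_num
        have : (0:ℝ) ≤ ∑ i : Fin N, rAll σ (stripV (pairF i) V) 0 p :=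
          Finset.sum_nonneg fun i _ => rAll_nonneg σ _ 0 p
        linarith
  | succ n ih =>
      intro V p
      calc rAll σ (stripV (famF v) V) (n+1) p + rAll σ (stripV {C} V) (n+1) p
          = stepExp Mφ σ p (fun q => rAll σ (stripV (famF v) (V ∪ {fpLast p})) n q
              + rAll σ (stripV {C} (V ∪ {fpLast p})) n q) := by
            rw [rAll_stripV_succ, rAll_stripV_succ, stepExp_add]
        _ ≤ stepExp Mφ σ p (fun q => 1
              + ∑ i : Fin N, rAll σ (stripV (pairF i) (V ∪ {fpLast p})) n q) :=
            stepExp_mono σ p fun q => ih (V ∪ {fpLast p}) q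
        _ = 1 + ∑ i : Fin N, stepExp Mφ σ p
              (fun q => rAll σ (stripV (pairF i) (V ∪ {fpLast p})) n q) :=
            stepExp_one_add_sum σ p Finset.univ _ (stepExp_const_one σ p)
        _ = 1 + ∑ i : Fin N, rAll σ (stripV (pairF i) V) (n+1) p := by
            congr 1
            exact Finset.sum_congr rfl fun i _ => (rAll_stripV_succ σ (pairF i) V n p).symm

lemma rAfter_viol (σ : Scheduler Mφ) (v : Fin N → Bool) (C : Set (Fin N × Bool))
    (hC : ∀ l ∈ C, ((l.1, v l.1) : Fin N × Bool) ≠ l) :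
    ∀ (j n : ℕ) (p : FPath (Fin N × Bool) Bool),
    rAfter σ (famF v) j n p + rAfter σ {C} j n p
      ≤ 1 + ∑ i : Fin N, rAfter σ (pairF i) j n p := by
  intro j
  induction j with
  | zero =>
      intro n p
      have h := rAll_viol σ v C hC n ∅ p
      rw [stripV_emptyV, stripV_emptyV] at h
      have h2 : ∑ i : Fin N, rAll σ (stripV (pairF i) (∅ : Set (Fin N × Bool))) n p
          = ∑ i : Fin N, rAll σ (pairF i) n p :=
        Finset.sum_congr rfl fun i _ => by rw [stripV_emptyV]
      rw [h2] at h
      exact h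
  | succ j ih =>
      intro n p
      calc rAfter σ (famF v) (j+1) n p + rAfter σ {C} (j+1) n p
          = stepExp Mφ σ p (fun q => rAfter σ (famF v) j n q + rAfter σ {C} j n q) := by
            rw [rAfter_succ, rAfter_succ, stepExp_add]
        _ ≤ stepExp Mφ σ p (fun q => 1 + ∑ i : Fin N, rAfter σ (pairF i) j n q) :=
            stepExp_mono σ p fun q => ih n q
        _ = 1 + ∑ i : Fin N, stepExp Mφ σ p (fun q => rAfter σ (pairF i) j n q) :=
            stepExp_one_add_sum σ p Finset.univ _ (stepExp_const_one σ p)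
        _ = 1 + ∑ i : Fin N, rAfter σ (pairF i) (j+1) n p := by
            congr 1

lemma bAll_viol (σ : Scheduler Mφ) (v : Fin N → Bool) (C : Set (Fin N × Bool))
    (hC : ∀ l ∈ C, ((l.1, v l.1) : Fin N × Bool) ≠ l) (s : Fin N × Bool) :
    bAll σ (famF v) s + bAll σ {C} s ≤ 1 + ∑ i : Fin N, bAll σ (pairF i) s := by
  have hsup : ∀ j, aSup σ (famF v) j s + aSup σ {C} j s
      ≤ 1 + ∑ i : Fin N, aSup σ (pairF i) j s := by
    intro j
    refine le_of_tendsto_of_tendsto'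
      ((tendsto_aSup σ (famF v) j s).add (tendsto_aSup σ {C} j s))
      (tendsto_const_nhds.add (tendsto_finset_sum _ fun i _ => tendsto_aSup σ (pairF i) j s))
      fun n => rAfter_viol σ v C hC j n _
  refine le_of_tendsto_of_tendsto'
    ((tendsto_bAll σ (famF v) s).add (tendsto_bAll σ {C} s))
    (tendsto_const_nhds.add (tendsto_finset_sum _ fun i _ => tendsto_bAll σ (pairF i) s))
    hsup

section CoverHP

variable (hN : 0 < N)
variable (hP : ∀ (i : Fin N) (b c : Bool),
      Mφ.P (i, b) c ((⟨(i.1 + 1) % N, Nat.mod_lt _ hN⟩ : Fin N), c) = 1 ∧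
      ∀ y : Fin N × Bool, y ≠ ((⟨(i.1 + 1) % N, Nat.mod_lt _ hN⟩ : Fin N), c) →
        Mφ.P (i, b) c y = 0)

include hN hP

/-- (a) Cover inequality at the `rAll` level. -/
lemma rAll_cover (σ : Scheduler Mφ) :
    ∀ (n : ℕ) (V : Set (Fin N × Bool)) (p : FPath (Fin N × Bool) Bool),
    (∀ i : Fin N, (∃ b : Bool, ((i, b) : Fin N × Bool) ∈ V) ∨ dd (fpLast p).1 i ≤ n) →
    1 ≤ ∑ v : Fin N → Bool, rAll σ (stripV (famF v) V) n p := by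
  intro n
  induction n with
  | zero =>
      intro V p hcond
      classical
      set v₀ : Fin N → Bool := fun i =>
        if h : ∃ b : Bool, ((i, b) : Fin N × Bool) ∈ V then h.choose else (fpLast p).2
        with hv₀
      have hv : ∀ i : Fin N, ((i, v₀ i) : Fin N × Bool) ∈ V ∪ {fpLast p} := by
        intro i
        rw [hv₀]
        by_cases h : ∃ b : Bool, ((i, b) : Fin N × Bool) ∈ V
        · simp only [h, dif_pos]
          exact Or.inl h.choose_spec
        · simp only [h, dif_neg, not_false_iff]
          have hd : dd (fpLast p).1 i ≤ 0 := (hcond i).resolve_left h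
          have : i = (fpLast p).1 := dd_eq_zero (Nat.le_zero.1 hd)
          rw [this]
          exact Or.inr rfl
      have hterm : rAll σ (stripV (famF v₀) V) 0 p = 1 := by
        rw [rAll_stripV_zero, if_pos ((stripV_famF_eq_empty v₀ _).2 hv)]
      calc (1:ℝ) = rAll σ (stripV (famF v₀) V) 0 p := hterm.symm
        _ ≤ ∑ v : Fin N → Bool, rAll σ (stripV (famF v) V) 0 p :=
            Finset.single_le_sum (f := fun v => rAll σ (stripV (famF v) V) 0 p)
              (fun v _ => rAll_nonneg σ _ 0 p) (Finset.mem_univ v₀)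
  | succ n ih =>
      intro V p hcond
      have hrw : ∑ v : Fin N → Bool, rAll σ (stripV (famF v) V) (n+1) p
          = stepExp Mφ σ p
            (fun q => ∑ v : Fin N → Bool, rAll σ (stripV (famF v) (V ∪ {fpLast p})) n q) := by
        rw [stepExp_sum σ p Finset.univ
          (fun v q => rAll σ (stripV (famF v) (V ∪ {fpLast p})) n q)]
        exact Finset.sum_congr rfl fun v _ => rAll_stripV_succ σ (famF v) V n p
      rw [hrw]
      apply one_le_stepExp
      intro a s' hs'
      have hs'eq := P_support hN hP hs'
      subst hs'eq
      apply ih (V ∪ {fpLast p})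
      intro i
      by_cases h : ∃ b : Bool, ((i, b) : Fin N × Bool) ∈ V
      · obtain ⟨b, hb⟩ := h
        exact Or.inl ⟨b, Or.inl hb⟩
      · have hd : dd (fpLast p).1 i ≤ n + 1 := (hcond i).resolve_left h
        by_cases hi : i = (fpLast p).1
        · refine Or.inl ⟨(fpLast p).2, ?_⟩
          rw [hi]
          exact Or.inr rfl
        · refine Or.inr ?_
          rw [fpLast_fpExt]
          show dd (nxt hN (fpLast p).1) i ≤ n
          have := dd_step hN hi
          omega

lemma one_le_sum_rAfter (σ : Scheduler Mφ) :
    ∀ (j : ℕ) (p : FPath (Fin N × Bool) Bool),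
    1 ≤ ∑ v : Fin N → Bool, rAfter σ (famF v) j (N - 1) p := by
  intro j
  induction j with
  | zero =>
      intro p
      have := rAll_cover hN hP σ (N-1) ∅ p (fun i => Or.inr (dd_le _ _))
      refine this.trans (le_of_eq ?_)
      exact Finset.sum_congr rfl fun v _ => by rw [stripV_emptyV, rAfter_zero]
  | succ j ih =>
      intro p
      have hrw : ∑ v : Fin N → Bool, rAfter σ (famF v) (j+1) (N-1) p
          = stepExp Mφ σ p (fun q => ∑ v : Fin N → Bool, rAfter σ (famF v) j (N-1) q) := by
        rw [stepExp_sum σ p Finset.univ (fun v q => rAfter σ (famF v) j (N-1) q)]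
        exact Finset.sum_congr rfl fun v _ => rAfter_succ σ (famF v) j (N-1) p
      rw [hrw]
      exact one_le_stepExp σ p fun a s' _ => ih _

lemma one_le_sum_bAll (σ : Scheduler Mφ) (s : Fin N × Bool) :
    1 ≤ ∑ v : Fin N → Bool, bAll σ (famF v) s := by
  refine ge_of_tendsto' (tendsto_finset_sum _ fun v _ => tendsto_bAll σ (famF v) s) fun j => ?_
  calc (1:ℝ) ≤ ∑ v : Fin N → Bool, rAfter σ (famF v) j (N-1) ((s, []) : FPath _ _) :=
        one_le_sum_rAfter hN hP σ j _
    _ ≤ ∑ v : Fin N → Bool, aSup σ (famF v) j s :=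
        Finset.sum_le_sum fun v _ => rAfter_le_aSup σ (famF v) j (N-1) s

end CoverHP

end Combos


noncomputable section Det

open Finset

set_option maxHeartbeats 1000000
set_option linter.unusedSectionVars false
set_option linter.unusedVariables false

variable {N : ℕ} {Mφ : MDP (Fin N × Bool) Bool}

/-- The deterministic run function for assignment `v`. -/
def stF (hN : 0 < N) (v : Fin N → Bool) : (Fin N × Bool) → ℕ → (Fin N × Bool)
  | s, 0 => s
  | s, k+1 => (nxt hN (stF hN v s k).1, v (nxt hN (stF hN v s k).1))

lemma stF_zero (hN : 0 < N) (v : Fin N → Bool) (s : Fin N × Bool) : stF hN v s 0 = s := rfl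

lemma stF_succ (hN : 0 < N) (v : Fin N → Bool) (s : Fin N × Bool) (k : ℕ) :
    stF hN v s (k+1) = (nxt hN (stF hN v s k).1, v (nxt hN (stF hN v s k).1)) := rfl

lemma stF_shift (hN : 0 < N) (v : Fin N → Bool) (s : Fin N × Bool) (k : ℕ) :
    stF hN v (stF hN v s 1) k = stF hN v s (k+1) := by
  induction k with
  | zero => rfl
  | succ k ih => rw [stF_succ, ih, ← stF_succ]

lemma stF_snd (hN : 0 < N) (v : Fin N → Bool) (s : Fin N × Bool) (k : ℕ) (hk : 1 ≤ k) :
    (stF hN v s k).2 = v (stF hN v s k).1 := by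
  obtain ⟨k', rfl⟩ : ∃ k', k = k' + 1 := ⟨k - 1, by omega⟩
  rw [stF_succ]

lemma stF_col (hN : 0 < N) (v : Fin N → Bool) (s : Fin N × Bool) (k : ℕ) :
    (stF hN v s (k+1)).1.1 = (s.1.1 + (k+1)) % N := by
  induction k with
  | zero => rfl
  | succ k ih =>
      rw [stF_succ]
      show ((stF hN v s (k+1)).1.1 + 1) % N = _
      rw [ih, Nat.mod_add_mod, Nat.add_assoc]

lemma orbit_hit (hN : 0 < N) (v : Fin N → Bool) (s : Fin N × Bool) (i : Fin N) :
    ∃ k, 1 ≤ k ∧ k ≤ N ∧ stF hN v s k = (i, v i) := by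
  have hc := s.1.2
  have hi := i.2
  set c := s.1.1 with hcdef
  refine ⟨if c < i.1 then i.1 - c else i.1 + N - c, by split <;> omega, by split <;> omega, ?_⟩
  set k := if c < i.1 then i.1 - c else i.1 + N - c with hk
  obtain ⟨k', hk'⟩ : ∃ k', k = k' + 1 := ⟨k - 1, by rw [hk]; split <;> omega⟩
  have hcol : (stF hN v s k).1.1 = i.1 := by
    rw [hk']
    rw [stF_col]
    rw [← hk']
    rw [hk]
    split
    · rw [show c + (i.1 - c) = i.1 by omega]
      exact Nat.mod_eq_of_lt hi
    · rw [show c + (i.1 + N - c) = i.1 + N by omega]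
      rw [Nat.add_mod_right]
      exact Nat.mod_eq_of_lt hi
  have h1 : (stF hN v s k).1 = i := Fin.ext hcol
  have h2 : (stF hN v s k).2 = v (stF hN v s k).1 := stF_snd hN v s k (by rw [hk']; omega)
  have : stF hN v s k = ((stF hN v s k).1, (stF hN v s k).2) := rfl
  rw [this, h1, h2, h1]

section DetSch

variable (hN : 0 < N)
variable (hP : ∀ (i : Fin N) (b c : Bool),
      Mφ.P (i, b) c ((⟨(i.1 + 1) % N, Nat.mod_lt _ hN⟩ : Fin N), c) = 1 ∧
      ∀ y : Fin N × Bool, y ≠ ((⟨(i.1 + 1) % N, Nat.mod_lt _ hN⟩ : Fin N), c) →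
        Mφ.P (i, b) c y = 0)
variable (v : Fin N → Bool)

include hN hP in
lemma P_ne (s : Fin N × Bool) (a : Bool) (y : Fin N × Bool) (h : y ≠ (nxt hN s.1, a)) :
    Mφ.P s a y = 0 := by
  obtain ⟨i, b⟩ := s
  exact (hP i b a).2 y h

/-- The memoryless deterministic scheduler induced by assignment `v`. -/
def detSch : Scheduler Mφ where
  act := fun p a => if a = v (nxt hN (fpLast p).1) then 1 else 0
  nonneg := by
    intro p a
    by_cases h : a = v (nxt hN (fpLast p).1) <;> simp [h]
  sum_one := by
    intro p
    rw [tsum_fintype]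
    cases hv : v (nxt hN (fpLast p).1) <;> simp [hv]
  not_enabled := by
    intro p a h
    exact absurd (enabled_all hN hP _ a) h

lemma detSch_act (p : FPath (Fin N × Bool) Bool) (a : Bool) :
    (detSch hN hP v).act p a = if a = v (nxt hN (fpLast p).1) then 1 else 0 := rfl

lemma stepExp_det (p : FPath (Fin N × Bool) Bool) (g : FPath (Fin N × Bool) Bool → ℝ) :
    stepExp Mφ (detSch hN hP v) p g
      = g (fpExt p (v (nxt hN (fpLast p).1))
          (nxt hN (fpLast p).1, v (nxt hN (fpLast p).1))) := by
  rw [stepExp_eq_sum]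
  simp only [detSch_act]
  rw [Finset.sum_eq_single (v (nxt hN (fpLast p).1))]
  · rw [Finset.sum_eq_single ((nxt hN (fpLast p).1, v (nxt hN (fpLast p).1)) : Fin N × Bool)]
    · rw [if_pos rfl, P_target hN hP, one_mul, one_mul]
    · intro y _ hy
      rw [P_ne hN hP _ _ y hy, mul_zero, zero_mul]
    · intro h; exact absurd (Finset.mem_univ _) h
  · intro a _ ha
    rw [if_neg ha]
    simp
  · intro h; exact absurd (Finset.mem_univ _) h

lemma rAll_det_one (T : Set (Fin N × Bool)) :
    ∀ (n : ℕ) (p : FPath (Fin N × Bool) Bool),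
    (∃ k ≤ n, stF hN v (fpLast p) k ∈ T) → rAll (detSch hN hP v) {T} n p = 1 := by
  intro n
  induction n with
  | zero =>
      rintro p ⟨k, hk, hmem⟩
      interval_cases k
      rw [stF_zero] at hmem
      simp [rAll_zero, strip, Finset.filter_singleton, hmem]
  | succ n ih =>
      rintro p ⟨k, hk, hmem⟩
      by_cases hl : fpLast p ∈ T
      · rw [rAll_succ]
        have hs : strip ({T} : Finset (Set (Fin N × Bool))) (fpLast p) = ∅ := by
          simp [strip, Finset.filter_singleton, hl]
        rw [hs, stepExp_congr _ p (rAll_empty _ n)]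
        exact stepExp_const_one _ p
      · obtain ⟨k', rfl⟩ : ∃ k', k = k' + 1 := by
          rcases Nat.eq_zero_or_pos k with rfl | hpos
          · rw [stF_zero] at hmem; exact absurd hmem hl
          · exact ⟨k - 1, by omega⟩
        rw [rAll_succ]
        have hs : strip ({T} : Finset (Set (Fin N × Bool))) (fpLast p) = {T} := by
          simp [strip, Finset.filter_singleton, hl]
        rw [hs, stepExp_det]
        apply ih
        refine ⟨k', by omega, ?_⟩
        rw [fpLast_fpExt]
        show stF hN v (stF hN v (fpLast p) 1) k' ∈ T
        rw [stF_shift]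
        exact hmem
  
lemma rAll_det_zero (T : Set (Fin N × Bool)) :
    ∀ (n : ℕ) (p : FPath (Fin N × Bool) Bool),
    (∀ k ≤ n, stF hN v (fpLast p) k ∉ T) → rAll (detSch hN hP v) {T} n p = 0 := by
  intro n
  induction n with
  | zero =>
      intro p h
      have hl : fpLast p ∉ T := h 0 le_rfl
      simp [rAll_zero, strip, Finset.filter_singleton, hl]
  | succ n ih =>
      intro p h
      have hl : fpLast p ∉ T := h 0 (by omega)
      rw [rAll_succ]
      have hs : strip ({T} : Finset (Set (Fin N × Bool))) (fpLast p) = {T} := by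
        simp [strip, Finset.filter_singleton, hl]
      rw [hs, stepExp_det]
      apply ih
      intro k hk
      rw [fpLast_fpExt]
      show stF hN v (stF hN v (fpLast p) 1) k ∉ T
      rw [stF_shift]
      exact h (k+1) (by omega)

lemma rAll_det_last (R : Finset (Set (Fin N × Bool))) :
    ∀ (n : ℕ) (p q : FPath (Fin N × Bool) Bool), fpLast p = fpLast q →
    rAll (detSch hN hP v) R n p = rAll (detSch hN hP v) R n q := by
  intro n
  induction n generalizing R with
  | zero => intro p q h; rw [rAll_zero, rAll_zero, h]
  | succ n ih =>
      intro p q h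
      rw [rAll_succ, rAll_succ, stepExp_det, stepExp_det, h]
      apply ih
      rw [fpLast_fpExt, fpLast_fpExt]

lemma rAfter_det (R : Finset (Set (Fin N × Bool))) :
    ∀ (j n : ℕ) (p : FPath (Fin N × Bool) Bool),
    rAfter (detSch hN hP v) R j n p
      = rAll (detSch hN hP v) R n ((stF hN v (fpLast p) j, []) : FPath (Fin N × Bool) Bool) := by
  intro j
  induction j with
  | zero =>
      intro n p
      rw [rAfter_zero]
      exact rAll_det_last hN hP v R n p _ (by rw [fpLast_nil, stF_zero])
  | succ j ih =>
      intro n p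
      rw [rAfter_succ, stepExp_det, ih]
      congr 2
      rw [fpLast_fpExt]
      show stF hN v (stF hN v (fpLast p) 1) j = _
      rw [stF_shift]

lemma bAll_det_one (T : Set (Fin N × Bool)) (s : Fin N × Bool)
    (hT : ∃ i : Fin N, ((i, v i) : Fin N × Bool) ∈ T) :
    bAll (detSch hN hP v) {T} s = 1 := by
  obtain ⟨i, hi⟩ := hT
  refine le_antisymm (bAll_le_one _ _ _) (le_ciInf fun j => ?_)
  refine le_trans ?_ (rAfter_le_aSup _ {T} j N s)
  rw [rAfter_det hN hP v {T} j N, fpLast_nil]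
  obtain ⟨k, hk1, hkN, hkeq⟩ := orbit_hit hN v (stF hN v s j) i
  have hone := rAll_det_one hN hP v T N ((stF hN v s j, []) : FPath (Fin N × Bool) Bool)
    ⟨k, hkN, by rw [fpLast_nil, hkeq]; exact hi⟩
  rw [hone]

lemma bAll_det_zero (i : Fin N) (b : Bool) (hb : b ≠ v i) (s : Fin N × Bool) :
    bAll (detSch hN hP v) {({(i, b)} : Set (Fin N × Bool))} s = 0 := by
  have hbdd : BddBelow (Set.range fun j => aSup (detSch hN hP v) {({(i, b)} : Set (Fin N × Bool))} j s) := by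
    refine ⟨0, ?_⟩; rintro x ⟨j, rfl⟩; exact aSup_nonneg _ _ j s
  refine le_antisymm ?_ (bAll_nonneg _ _ _)
  refine le_trans (ciInf_le hbdd 1) ?_
  have hz : ∀ n, rAfter (detSch hN hP v) {({(i, b)} : Set (Fin N × Bool))} 1 n ((s, []) : FPath (Fin N × Bool) Bool) = 0 := by
    intro n
    rw [rAfter_det hN hP v _ 1 n]
    apply rAll_det_zero
    intro k hk
    rw [fpLast_nil]
    show stF hN v (stF hN v s 1) k ∉ _
    rw [stF_shift]
    intro hmem
    rw [Set.mem_singleton_iff] at hmem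
    have hsnd := stF_snd hN v s (k+1) (by omega)
    rw [hmem] at hsnd
    exact hb hsnd
  have heq : aSup (detSch hN hP v) {({(i, b)} : Set (Fin N × Bool))} 1 s = 0 := by
    unfold aSup
    have hfn : (fun n : ℕ => rAfter (detSch hN hP v)
        {({(i, b)} : Set (Fin N × Bool))} 1 n ((s, []) : FPath (Fin N × Bool) Bool))
        = fun _ => (0:ℝ) := funext hz
    rw [hfn, ciSup_const]
  exact le_of_eq heq

end DetSch

end Det


/-- States of `M_φ` are literals `(i, b) : Fin N × Bool`, with `(i, true)` representing `xᵢ` and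
`(i, false)` representing `x̄ᵢ`; actions are `Bool`, with `true` representing `α` and `false`
representing `ᾱ`.  Clauses are nonempty finite sets of literals. -/
theorem sat_iff_relBuechi_scheduler
    (N : ℕ) (hN : 0 < N) (Mn : ℕ)
    (Cl : Fin Mn → Finset (Fin N × Bool)) (hCl : ∀ j, (Cl j).Nonempty)
    (Mφ : MDP (Fin N × Bool) Bool)
    (hP : ∀ (i : Fin N) (b c : Bool),
      Mφ.P (i, b) c ((⟨(i.1 + 1) % N, Nat.mod_lt _ hN⟩ : Fin N), c) = 1 ∧
      ∀ y : Fin N × Bool, y ≠ ((⟨(i.1 + 1) % N, Nat.mod_lt _ hN⟩ : Fin N), c) →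
        Mφ.P (i, b) c y = 0) :
    (∃ v : Fin N → Bool, ∀ j : Fin Mn, ∃ l ∈ Cl j, v l.1 = l.2) ↔
    (∃ σ : Scheduler Mφ,
        (∑ i : Fin N,
            ((2 : ℝ) -
              (buchiProb Mφ σ ((⟨0, hN⟩ : Fin N), true) {(i, true)} +
                buchiProb Mφ σ ((⟨0, hN⟩ : Fin N), true) {(i, false)}))) +
          (∑ j : Fin Mn, buchiProb Mφ σ ((⟨0, hN⟩ : Fin N), true) (↑(Cl j) : Set (Fin N × Bool)))
          ≥ (N : ℝ) + (Mn : ℝ)) := by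
  classical
  set s₀ : Fin N × Bool := ((⟨0, hN⟩ : Fin N), true) with hs₀
  constructor
  · -- forward direction
    rintro ⟨v, hv⟩
    refine ⟨detSch hN hP v, ?_⟩
    have hterm : ∀ i : Fin N,
        buchiProb Mφ (detSch hN hP v) s₀ {(i, true)}
          + buchiProb Mφ (detSch hN hP v) s₀ {(i, false)} = 1 := by
      intro i
      rw [buchiProb_eq_bAll, buchiProb_eq_bAll]
      cases hvi : v i with
      | true =>
          rw [bAll_det_one hN hP v {(i, true)} s₀ ⟨i, by rw [hvi]; exact rfl⟩,
            bAll_det_zero hN hP v i false (by simp [hvi]) s₀]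
          norm_num
      | false =>
          rw [bAll_det_zero hN hP v i true (by simp [hvi]) s₀,
            bAll_det_one hN hP v {(i, false)} s₀ ⟨i, by rw [hvi]; exact rfl⟩]
          norm_num
    have hcl : ∀ j : Fin Mn,
        buchiProb Mφ (detSch hN hP v) s₀ (↑(Cl j) : Set (Fin N × Bool)) = 1 := by
      intro j
      obtain ⟨l, hl, hvl⟩ := hv j
      rw [buchiProb_eq_bAll]
      refine bAll_det_one hN hP v _ s₀ ⟨l.1, ?_⟩
      have hll : ((l.1, v l.1) : Fin N × Bool) = l := by rw [hvl]
      rw [hll]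
      exact Finset.mem_coe.mpr hl
    have h1 : (∑ i : Fin N,
        ((2 : ℝ) - (buchiProb Mφ (detSch hN hP v) s₀ {(i, true)} +
          buchiProb Mφ (detSch hN hP v) s₀ {(i, false)}))) = (N : ℝ) := by
      have he : ∀ i ∈ Finset.univ (α := Fin N),
          (2 : ℝ) - (buchiProb Mφ (detSch hN hP v) s₀ {(i, true)} +
            buchiProb Mφ (detSch hN hP v) s₀ {(i, false)}) = 1 := by
        intro i _
        rw [hterm i]
        norm_num
      rw [Finset.sum_congr rfl he, Finset.sum_const, Finset.card_univ, Fintype.card_fin]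
      simp
    have h2 : (∑ j : Fin Mn,
        buchiProb Mφ (detSch hN hP v) s₀ (↑(Cl j) : Set (Fin N × Bool))) = (Mn : ℝ) := by
      rw [Finset.sum_congr rfl fun j _ => hcl j, Finset.sum_const, Finset.card_univ,
        Fintype.card_fin]
      simp
    rw [h1, h2]
  · -- reverse direction
    rintro ⟨σ, hσ⟩
    rw [ge_iff_le] at hσ
    simp only [buchiProb_eq_bAll] at hσ
    by_contra hsat
    push_neg at hsat
    have key1 : ∀ i : Fin N, 1 + bAll σ (pairF i) s₀ ≤
        bAll σ {({(i, true)} : Set (Fin N × Bool))} s₀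
          + bAll σ {({(i, false)} : Set (Fin N × Bool))} s₀ := by
      intro i
      have hmod := bAll_modular σ {(i, true)} {(i, false)} s₀
      have hcol := one_le_bAll_col hN hP σ
        (({(i, true)} ∪ {(i, false)}) : Set (Fin N × Bool)) i
        (fun b => by cases b <;> simp) s₀
      have hpair : ({({(i, true)} : Set (Fin N × Bool)),
          ({(i, false)} : Set (Fin N × Bool))} : Finset (Set (Fin N × Bool))) = pairF i := rfl
      rw [hpair] at hmod
      linarith
    have hd0 : ∀ i : Fin N, 0 ≤ bAll σ (pairF i) s₀ := fun i => bAll_nonneg σ _ s₀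
    have hr1 : ∀ j : Fin Mn, bAll σ {(↑(Cl j) : Set (Fin N × Bool))} s₀ ≤ 1 :=
      fun j => bAll_le_one σ _ s₀
    have hDnn : 0 ≤ ∑ i : Fin N, bAll σ (pairF i) s₀ :=
      Finset.sum_nonneg fun i _ => hd0 i
    have hsum1 : ∑ i : Fin N,
        ((2 : ℝ) - (bAll σ {({(i, true)} : Set (Fin N × Bool))} s₀
          + bAll σ {({(i, false)} : Set (Fin N × Bool))} s₀))
        ≤ (N : ℝ) - ∑ i : Fin N, bAll σ (pairF i) s₀ := by
      have hle : ∀ i ∈ Finset.univ (α := Fin N),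
          (2 : ℝ) - (bAll σ {({(i, true)} : Set (Fin N × Bool))} s₀
            + bAll σ {({(i, false)} : Set (Fin N × Bool))} s₀)
          ≤ 1 - bAll σ (pairF i) s₀ := fun i _ => by linarith [key1 i]
      calc ∑ i : Fin N,
          ((2 : ℝ) - (bAll σ {({(i, true)} : Set (Fin N × Bool))} s₀
            + bAll σ {({(i, false)} : Set (Fin N × Bool))} s₀))
          ≤ ∑ i : Fin N, (1 - bAll σ (pairF i) s₀) := Finset.sum_le_sum hle
        _ = (N : ℝ) - ∑ i : Fin N, bAll σ (pairF i) s₀ := by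
            rw [Finset.sum_sub_distrib, Finset.sum_const, Finset.card_univ, Fintype.card_fin]
            simp
    have hsum2 : ∑ j : Fin Mn, bAll σ {(↑(Cl j) : Set (Fin N × Bool))} s₀ ≤ (Mn : ℝ) := by
      calc ∑ j : Fin Mn, bAll σ {(↑(Cl j) : Set (Fin N × Bool))} s₀
          ≤ ∑ _j : Fin Mn, (1 : ℝ) := Finset.sum_le_sum fun j _ => hr1 j
        _ = (Mn : ℝ) := by simp
    have hRge : (Mn : ℝ) + ∑ i : Fin N, bAll σ (pairF i) s₀
        ≤ ∑ j : Fin Mn, bAll σ {(↑(Cl j) : Set (Fin N × Bool))} s₀ := by linarith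
    have hDz : ∑ i : Fin N, bAll σ (pairF i) s₀ = 0 := by linarith
    have hreach : ∀ j : Fin Mn, bAll σ {(↑(Cl j) : Set (Fin N × Bool))} s₀ = 1 := by
      intro j
      by_contra hne
      have hlt : bAll σ {(↑(Cl j) : Set (Fin N × Bool))} s₀ < 1 :=
        lt_of_le_of_ne (hr1 j) hne
      have hstrict : ∑ j' : Fin Mn, bAll σ {(↑(Cl j') : Set (Fin N × Bool))} s₀
          < ∑ _j : Fin Mn, (1 : ℝ) :=
        Finset.sum_lt_sum (fun j' _ => hr1 j') ⟨j, Finset.mem_univ j, hlt⟩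
      have hone : ∑ _j : Fin Mn, (1 : ℝ) = (Mn : ℝ) := by simp
      rw [hone] at hstrict
      linarith
    have hdzero : ∀ i : Fin N, bAll σ (pairF i) s₀ = 0 := fun i =>
      (Finset.sum_eq_zero_iff_of_nonneg fun i' _ => hd0 i').1 hDz i (Finset.mem_univ i)
    have hμ : ∀ v : Fin N → Bool, bAll σ (famF v) s₀ ≤ 0 := by
      intro v
      obtain ⟨j, hj⟩ := hsat v
      have hC : ∀ l ∈ (↑(Cl j) : Set (Fin N × Bool)), ((l.1, v l.1) : Fin N × Bool) ≠ l := by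
        intro l hl heq
        exact hj l (Finset.mem_coe.1 hl) (congrArg Prod.snd heq)
      have hviol := bAll_viol σ v (↑(Cl j)) hC s₀
      have hsd : ∑ i : Fin N, bAll σ (pairF i) s₀ = 0 := hDz
      rw [hreach j, hsd] at hviol
      linarith
    have hcov := one_le_sum_bAll hN hP σ s₀
    have hnp : ∑ v : Fin N → Bool, bAll σ (famF v) s₀ ≤ 0 :=
      Finset.sum_nonpos fun v _ => hμ v
    linarith
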